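/- Let k be a field of characteristic 0, K = k[t,t⁻¹] the Laurent polynomial algebra, and D₀ := t·(d/dt) ∈ End_k(K). The map Φ : k[x] # ℤ → 𝒟_K sending f # t^d to the operator t^a ↦ f(a)·t^{d+a} is an isomorphism of ℤ-graded k-algebras, where k[x] # ℤ is the crossed product with multiplication (f # t^d)(g # t^e) = σ^e(f)g # t^{d+e}, σ(x) = x+1, and 𝒟_K is the ring of k-linear differential operators on K. -/

import Mathlib

open Polynomial LaurentPolynomial

/-- `D` is a differential operator of order at most `n` on the commutative `k`-algebra `K`. -/
def IsDiffOp (k K : Type*) [CommSemiring k] [CommRing K] [Algebra k K] :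
    ℕ → (K →ₗ[k] K) → Prop
  | 0, D => ∃ u : K, ∀ x, D x = u * x
  | n + 1, D => ∀ a : K,
      IsDiffOp k K n (D ∘ₗ LinearMap.mulLeft k a - LinearMap.mulLeft k a ∘ₗ D)

/-- The operator `f # t^d` on `K = k[t,t⁻¹]`, acting by `t^a ↦ f(a) • t^{d+a}`. -/
noncomputable def Phi (k : Type*) [Field k] (f : Polynomial k) (d : ℤ) :
    LaurentPolynomial k →ₗ[k] LaurentPolynomial k :=
  (Finsupp.lsum k fun a : ℤ =>
    LinearMap.toSpanSingleton k (LaurentPolynomial k)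
      (f.eval (a : k) • LaurentPolynomial.T (d + a))) ∘ₗ
    (AddMonoidAlgebra.coeffLinearEquiv k).toLinearMap

section general
variable {k K : Type*} [CommSemiring k] [CommRing K] [Algebra k K]

/-- The commutator of `D` with multiplication by `a`. -/
def br (D : K →ₗ[k] K) (a : K) : K →ₗ[k] K :=
  D ∘ₗ LinearMap.mulLeft k a - LinearMap.mulLeft k a ∘ₗ D

lemma isDiffOp_succ_iff (n : ℕ) (D : K →ₗ[k] K) :
    IsDiffOp k K (n+1) D ↔ ∀ a : K, IsDiffOp k K n (br D a) := Iff.rfl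

lemma br_apply (D : K →ₗ[k] K) (a x : K) : br D a x = D (a * x) - a * D x := rfl

lemma br_zero_left (a : K) : br (0 : K →ₗ[k] K) a = 0 := by
  ext x; simp [br_apply]

lemma br_add_left (D E : K →ₗ[k] K) (a : K) : br (D + E) a = br D a + br E a := by
  ext x; simp [br_apply]; ring

lemma br_smul_left (c : k) (D : K →ₗ[k] K) (a : K) : br (c • D) a = c • br D a := by
  ext x; simp [br_apply, smul_sub, mul_smul_comm]

lemma br_zero_right (D : K →ₗ[k] K) : br D 0 = 0 := by
  ext x; simp [br_apply]

lemma br_add_right (D : K →ₗ[k] K) (a b : K) : br D (a + b) = br D a + br D b := by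
  ext x; simp [br_apply, add_mul]; ring

lemma br_smul_right (D : K →ₗ[k] K) (c : k) (a : K) : br D (c • a) = c • br D a := by
  ext x; simp [br_apply, smul_mul_assoc, smul_sub]

lemma isDiffOp_zero : ∀ n, IsDiffOp k K n (0 : K →ₗ[k] K)
  | 0 => ⟨0, fun x => by simp⟩
  | n + 1 => fun a => by
      rw [show (0:K→ₗ[k]K) ∘ₗ LinearMap.mulLeft k a - LinearMap.mulLeft k a ∘ₗ 0
          = br (0:K→ₗ[k]K) a from rfl, br_zero_left]
      exact isDiffOp_zero n

lemma isDiffOp_add : ∀ n (D E : K →ₗ[k] K), IsDiffOp k K n D → IsDiffOp k K n E →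
    IsDiffOp k K n (D + E)
  | 0, D, E, ⟨u, hu⟩, ⟨v, hv⟩ => ⟨u + v, fun x => by simp [hu, hv, add_mul]⟩
  | n + 1, D, E, hD, hE => fun a => by
      rw [show (D+E) ∘ₗ LinearMap.mulLeft k a - LinearMap.mulLeft k a ∘ₗ (D+E)
          = br (D+E) a from rfl, br_add_left]
      exact isDiffOp_add n _ _ (hD a) (hE a)

lemma isDiffOp_smul : ∀ n (c : k) (D : K →ₗ[k] K), IsDiffOp k K n D → IsDiffOp k K n (c • D)
  | 0, c, D, ⟨u, hu⟩ => ⟨c • u, fun x => by simp [hu, smul_mul_assoc]⟩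
  | n + 1, c, D, hD => fun a => by
      rw [show (c • D) ∘ₗ LinearMap.mulLeft k a - LinearMap.mulLeft k a ∘ₗ (c • D)
          = br (c • D) a from rfl, br_smul_left]
      exact isDiffOp_smul n c _ (hD a)

lemma isDiffOp_succ : ∀ n (D : K →ₗ[k] K), IsDiffOp k K n D → IsDiffOp k K (n + 1) D
  | 0, D, ⟨u, hu⟩ => fun a => ⟨0, fun x => by simp [br_apply, hu, zero_mul]; ring⟩
  | n + 1, D, hD => fun a => isDiffOp_succ n _ (hD a)

lemma isDiffOp_mono {m n : ℕ} (h : m ≤ n) (D : K →ₗ[k] K) (hD : IsDiffOp k K m D) :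
    IsDiffOp k K n D := by
  induction h with
  | refl => exact hD
  | step _ ih => exact isDiffOp_succ _ _ ih

lemma isDiffOp_sum {n : ℕ} {ι : Type*} (s : Finset ι) (f : ι → (K →ₗ[k] K))
    (h : ∀ i ∈ s, IsDiffOp k K n (f i)) : IsDiffOp k K n (∑ i ∈ s, f i) := by
  classical
  induction s using Finset.induction_on with
  | empty => simpa using isDiffOp_zero n
  | @insert x s hx ih =>
      rw [Finset.sum_insert hx]
      exact isDiffOp_add n _ _ (h _ (Finset.mem_insert_self _ _))
        (ih fun i hi => h i (Finset.mem_insert_of_mem hi))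

lemma isDiffOp_br_all {n : ℕ} (D : K →ₗ[k] K)
    (S : Set K) (hspan : Submodule.span k S = ⊤)
    (h : ∀ a ∈ S, IsDiffOp k K n (br D a)) : ∀ a : K, IsDiffOp k K n (br D a) := by
  intro a
  have ha : a ∈ Submodule.span k S := hspan ▸ Submodule.mem_top
  induction ha using Submodule.span_induction with
  | mem x hx => exact h x hx
  | zero => rw [br_zero_right]; exact isDiffOp_zero n
  | add x y _ _ hx hy => rw [br_add_right]; exact isDiffOp_add n _ _ hx hy
  | smul c x _ hx => rw [br_smul_right]; exact isDiffOp_smul n c _ hx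

end general

section poly
variable {k : Type*} [Field k]

lemma comp_coeff_of_le (f : Polynomial k) (b : k) (m : ℕ) (h : f.natDegree ≤ m) :
    (f.comp (X + Polynomial.C b)).coeff m = f.coeff m := by
  rw [← taylor_apply, taylor_coeff]
  have : (hasseDeriv m f) = Polynomial.C (f.coeff m) := by
    ext j
    rw [hasseDeriv_coeff]
    cases j with
    | zero => simp
    | succ j =>
        rw [coeff_eq_zero_of_natDegree_lt (by omega), coeff_C, if_neg (by omega), mul_zero]
  rw [this, eval_C]

lemma natDegree_comp_sub_le (f : Polynomial k) (b : k) (n : ℕ) (h : f.natDegree ≤ n + 1) :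
    (f.comp (X + Polynomial.C b) - f).natDegree ≤ n := by
  rw [natDegree_le_iff_coeff_eq_zero]
  intro m hm
  rw [coeff_sub, comp_coeff_of_le f b m (by omega), sub_self]

lemma span_T_top : Submodule.span k (Set.range (T : ℤ → LaurentPolynomial k)) = ⊤ := by
  rw [eq_top_iff]
  intro x _
  induction x using AddMonoidAlgebra.induction_linear with
  | zero => exact Submodule.zero_mem _
  | add f g hf hg => exact Submodule.add_mem _ (hf Submodule.mem_top) (hg Submodule.mem_top)
  | single a c =>
      have : (AddMonoidAlgebra.single a c : LaurentPolynomial k) = c • T a := by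
        rw [T, AddMonoidAlgebra.smul_single, smul_eq_mul, mul_one]
      rw [this]
      exact Submodule.smul_mem _ _ (Submodule.subset_span ⟨a, rfl⟩)

lemma Phi_single (f : Polynomial k) (d a : ℤ) (c : k) :
    Phi k f d (AddMonoidAlgebra.single a c) = (c * f.eval (a : k)) • T (d + a) := by
  show (Finsupp.lsum k fun b : ℤ => LinearMap.toSpanSingleton k (LaurentPolynomial k)
    (f.eval (b : k) • T (d + b))) (Finsupp.single a c) = _
  rw [Finsupp.lsum_single, LinearMap.toSpanSingleton_apply, smul_smul]

lemma Phi_T (f : Polynomial k) (d a : ℤ) :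
    Phi k f d (T a) = f.eval (a : k) • T (d + a) := by
  simpa using Phi_single f d a 1

lemma Lhom_ext {D E : LaurentPolynomial k →ₗ[k] LaurentPolynomial k}
    (h : ∀ a : ℤ, D (T a) = E (T a)) : D = E :=
  LinearMap.ext_on_range span_T_top h

lemma br_T (f : Polynomial k) (d b : ℤ) :
    br (Phi k f d) (T b) = Phi k (f.comp (X + Polynomial.C (b : k)) - f) (d + b) := by
  apply Lhom_ext
  intro a
  have h1 : (T b : LaurentPolynomial k) * T a = T (b + a) := (T_add b a).symm
  show Phi k f d (T b * T a) - T b * Phi k f d (T a) = _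
  rw [h1, Phi_T, Phi_T, Phi_T, mul_smul_comm, ← T_add]
  rw [eval_sub, eval_comp, eval_add, eval_X, eval_C, sub_smul]
  push_cast
  rw [show d + (b + a) = d + b + a by ring, show b + (d + a) = d + b + a by ring,
    show (a : k) + (b : k) = (b:k) + (a:k) by ring]

lemma Phi_C_eq_mulLeft (c : k) (d : ℤ) :
    Phi k (Polynomial.C c) d = LinearMap.mulLeft k (c • (T d : LaurentPolynomial k)) := by
  apply Lhom_ext
  intro a
  rw [Phi_T, eval_C, LinearMap.mulLeft_apply, smul_mul_assoc, ← T_add]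

lemma isDiffOp_phi : ∀ (n : ℕ) (f : Polynomial k) (d : ℤ), f.natDegree ≤ n →
    IsDiffOp k (LaurentPolynomial k) n (Phi k f d)
  | 0, f, d, h => by
      rw [Polynomial.eq_C_of_natDegree_le_zero h, Phi_C_eq_mulLeft]
      exact ⟨f.coeff 0 • T d, fun x => rfl⟩
  | n + 1, f, d, h => by
      rw [show IsDiffOp k (LaurentPolynomial k) (n+1) (Phi k f d) ↔
        ∀ a, IsDiffOp k (LaurentPolynomial k) n (br (Phi k f d) a) from Iff.rfl]
      apply isDiffOp_br_all (Phi k f d) (Set.range (T : ℤ → LaurentPolynomial k)) span_T_top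
      rintro _ ⟨b, rfl⟩
      rw [br_T]
      exact isDiffOp_phi n _ _ (natDegree_comp_sub_le f _ n h)

end poly

section anti
variable {k : Type*} [Field k] [CharZero k]


lemma exists_antideriv_aux : ∀ (n : ℕ) (F : Polynomial k), F.natDegree ≤ n →
    ∃ H : Polynomial k, H.comp (X + Polynomial.C 1) - H = F
  | 0, F, h => by
      refine ⟨Polynomial.C (F.coeff 0) * X, ?_⟩
      rw [mul_comp, C_comp, X_comp, mul_add, add_sub_cancel_left, Polynomial.C_1, mul_one]
      exact (Polynomial.eq_C_of_natDegree_le_zero h).symm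
  | n + 1, F, h => by
      set c : k := F.coeff (n + 1) with hc
      set H₀ : Polynomial k := Polynomial.C (c / (n + 2 : k)) * X ^ (n + 2) with hH₀
      have hn2 : ((n : k) + 2) ≠ 0 := by
        have : ((n+2 : ℕ) : k) ≠ 0 := Nat.cast_ne_zero.mpr (by omega)
        push_cast at this; exact this
      have hdeg : H₀.natDegree ≤ n + 2 :=
        le_trans (natDegree_C_mul_le _ _) (by rw [natDegree_X_pow])
      have hcompcoeff : ∀ m : ℕ, (H₀.comp (X + Polynomial.C 1)).coeff m
          = c / (n + 2 : k) * ((n+2).choose m : k) := by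
        intro m
        rw [hH₀, mul_comp, C_comp, X_pow_comp, coeff_C_mul, Polynomial.C_1,
          coeff_X_add_one_pow]
      set G : Polynomial k := F - (H₀.comp (X + Polynomial.C 1) - H₀) with hG
      have hGdeg : G.natDegree ≤ n := by
        rw [natDegree_le_iff_coeff_eq_zero]
        intro m hm
        rw [hG, coeff_sub, coeff_sub, hcompcoeff, hH₀, coeff_C_mul, coeff_X_pow]
        rcases eq_or_lt_of_le (Nat.succ_le_of_lt hm) with hmeq | hmlt
        · rw [← hmeq, if_neg (by omega), mul_zero, sub_zero, Nat.choose_succ_self_right,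
            show (((n+2:ℕ)):k) = (n:k)+2 by push_cast; ring, div_mul_cancel₀ _ hn2]
          rw [hc]
          exact sub_self _
        · rw [coeff_eq_zero_of_natDegree_lt (by omega : F.natDegree < m)]
          rcases eq_or_lt_of_le (Nat.succ_le_of_lt hmlt) with h2 | h2
          · rw [← h2, if_pos rfl, Nat.choose_self]
            push_cast; ring
          · rw [if_neg (by omega), Nat.choose_eq_zero_of_lt (by omega)]
            push_cast; ring
      obtain ⟨H₁, hH₁⟩ := exists_antideriv_aux n G hGdeg
      refine ⟨H₀ + H₁, ?_⟩
      rw [add_comp]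
      rw [hG] at hH₁
      linear_combination hH₁

lemma exists_antideriv (F : Polynomial k) (c : k) :
    ∃ H : Polynomial k, H.comp (X + Polynomial.C 1) - H = F ∧ H.eval 0 = c := by
  obtain ⟨H, hH⟩ := exists_antideriv_aux F.natDegree F le_rfl
  refine ⟨H - Polynomial.C (H.eval 0) + Polynomial.C c, ?_, by simp⟩
  rw [add_comp, sub_comp, C_comp, C_comp]
  linear_combination hH

end anti

section surj
variable {k : Type*} [Field k] [CharZero k]

omit [CharZero k] in
lemma single_eq_smul_T (a : ℤ) (c : k) :
    (AddMonoidAlgebra.single a c : LaurentPolynomial k) = c • T a := by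
  rw [T, AddMonoidAlgebra.smul_single, smul_eq_mul, mul_one]

omit [CharZero k] in
lemma rep_finsupp (u : LaurentPolynomial k) : u = ∑ d ∈ u.coeff.support, u.coeff d • T d := by
  apply AddMonoidAlgebra.coeff_injective
  rw [AddMonoidAlgebra.coeff_sum]
  conv_lhs => rw [← Finsupp.sum_single u.coeff]
  rw [Finsupp.sum]
  exact Finset.sum_congr rfl fun d _ => by rw [← single_eq_smul_T d (u.coeff d)]; rfl

omit [CharZero k] in
lemma mulLeft_eq_sum (u : LaurentPolynomial k) :
    LinearMap.mulLeft k u = ∑ d ∈ u.coeff.support, Phi k (Polynomial.C (u.coeff d)) d := by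
  apply Lhom_ext
  intro a
  rw [LinearMap.sum_apply, LinearMap.mulLeft_apply]
  conv_lhs => rw [rep_finsupp u, Finset.sum_mul]
  refine Finset.sum_congr rfl fun d _ => ?_
  rw [Phi_T, eval_C, smul_mul_assoc, ← T_add]

lemma phi_surj : ∀ (n : ℕ) (D : LaurentPolynomial k →ₗ[k] LaurentPolynomial k),
    IsDiffOp k (LaurentPolynomial k) n D →
    ∃ (s : Finset ℤ) (F : ℤ → Polynomial k), D = ∑ d ∈ s, Phi k (F d) d
  | 0, D, ⟨u, hu⟩ =>
      ⟨u.coeff.support, fun d => Polynomial.C (u.coeff d), by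
        rw [← mulLeft_eq_sum]; exact LinearMap.ext fun x => hu x⟩
  | n + 1, D, hD => by
      classical
      obtain ⟨s, F, hB⟩ := phi_surj n _ (hD (T 1))
      have hB' : br D (T 1) = ∑ d ∈ s, Phi k (F d) d := hB
      set B := br D (T 1) with hBdef
      set F₀ : ℤ → Polynomial k := fun e => if e ∈ s then F e else 0 with hF₀
      set u := D (T 0) with hu
      choose G hG hG0 using fun d : ℤ => exists_antideriv (F₀ (d+1)) (u.coeff d)
      set s₂ : Finset ℤ := s.image (· - 1) ∪ u.coeff.support with hs₂
      have hBT : ∀ a : ℤ, B (T a) = ∑ e ∈ s, (F e).eval (a:k) • T (e + a) := by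
        intro a
        rw [hB', LinearMap.sum_apply]
        exact Finset.sum_congr rfl fun e _ => Phi_T (F e) e a
      have hrec : ∀ a : ℤ, D (T (a+1)) = B (T a) + T 1 * D (T a) := by
        intro a
        have h0 : B (T a) = D (T 1 * T a) - T 1 * D (T a) := rfl
        rw [h0, ← T_add, show (1:ℤ)+a = a+1 by ring]
        ring
      have hstep : ∀ b : ℤ, (∑ d ∈ s₂, (G d).eval ((b+1:ℤ):k) • T (d+(b+1)))
          = B (T b) + T 1 * ∑ d ∈ s₂, (G d).eval (b:k) • T (d+b) := by
        intro b
        have heval : ∀ d : ℤ, (G d).eval ((b+1:ℤ):k)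
            = (G d).eval (b:k) + (F₀ (d+1)).eval (b:k) := by
          intro d
          have h := congrArg (Polynomial.eval (b:k)) (hG d)
          rw [eval_sub, eval_comp, eval_add, eval_X, eval_C] at h
          push_cast
          linear_combination h
        have hL : (∑ d ∈ s₂, (G d).eval ((b+1:ℤ):k) • T (d+(b+1)))
            = ∑ d ∈ s₂, ((G d).eval (b:k) • (T (d+(b+1)) : LaurentPolynomial k)
                + (F₀ (d+1)).eval (b:k) • T (d+(b+1))) :=
          Finset.sum_congr rfl fun d _ => by rw [heval d, add_smul]
        rw [hL, Finset.sum_add_distrib]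
        have h2 : (T 1 : LaurentPolynomial k) * (∑ d ∈ s₂, (G d).eval (b:k) • T (d+b))
            = ∑ d ∈ s₂, (G d).eval (b:k) • (T (d+(b+1)) : LaurentPolynomial k) := by
          rw [Finset.mul_sum]
          refine Finset.sum_congr rfl fun d _ => ?_
          rw [mul_smul_comm, ← T_add, show (1:ℤ)+(d+b) = d+(b+1) by ring]
        have h1 : (∑ d ∈ s₂, (F₀ (d+1)).eval (b:k) • (T (d+(b+1)) : LaurentPolynomial k))
            = B (T b) := by
          rw [hBT b]
          have hinj : Set.InjOn (· + (1:ℤ)) s₂ := fun x _ y _ h => by simpa using h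
          have hA : (∑ d ∈ s₂, (F₀ (d+1)).eval (b:k) • (T (d+(b+1)) : LaurentPolynomial k))
              = ∑ e ∈ s₂.image (· + 1), (F₀ e).eval (b:k) • (T (e+b) : LaurentPolynomial k) := by
            rw [Finset.sum_image (fun x hx y hy h => hinj hx hy h)]
            exact Finset.sum_congr rfl fun d _ => by
              rw [show d+1+b = d+(b+1) by ring]
          rw [hA]
          have hsub : s ⊆ s₂.image (· + 1) := by
            intro e he
            rw [Finset.mem_image]
            exact ⟨e - 1, by
              rw [hs₂, Finset.mem_union, Finset.mem_image]
              exact Or.inl ⟨e, he, rfl⟩, by ring⟩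
          rw [← Finset.sum_subset hsub (fun e _ hne => by
            rw [hF₀]; simp only [if_neg hne, eval_zero, zero_smul])]
          refine Finset.sum_congr rfl fun e he => ?_
          rw [hF₀]; simp only [if_pos he]
        rw [h1, ← h2]
        exact add_comm _ _
      have main : ∀ a : ℤ, D (T a) = ∑ d ∈ s₂, (G d).eval (a:k) • T (d + a) := by
        intro a
        induction a using Int.induction_on with
        | zero =>
            rw [← hu]
            simp only [Int.cast_zero, add_zero, hG0]
            conv_lhs => rw [rep_finsupp u]
            refine Finset.sum_subset Finset.subset_union_right fun d _ hnd => ?_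
            rw [Finsupp.notMem_support_iff.mp hnd, zero_smul]
        | succ i ih =>
            rw [hrec i, ih]
            exact (hstep i).symm
        | pred i ih =>
            have h3 := hrec (-i-1)
            rw [show (-(i:ℤ)-1+1 : ℤ) = -i by ring, ih] at h3
            have h4 := hstep (-i-1)
            rw [show (-(i:ℤ)-1+1 : ℤ) = -i by ring] at h4
            have h5 : T 1 * D (T (-(i:ℤ)-1))
                = T 1 * ∑ d ∈ s₂, (G d).eval ((-(i:ℤ)-1 : ℤ):k) • T (d+(-(i:ℤ)-1)) :=
              add_left_cancel (h3.symm.trans h4)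
            have h6 := congrArg (fun x => T (-1 : ℤ) * x) h5
            simp only [← mul_assoc, ← T_add] at h6
            norm_num at h6
            push_cast
            exact h6
      refine ⟨s₂, G, ?_⟩
      apply Lhom_ext
      intro a
      rw [main a, LinearMap.sum_apply]
      exact Finset.sum_congr rfl fun d _ => (Phi_T (G d) d a).symm

end surj

section parts
variable {k : Type*} [Field k]

lemma Phi_one_zero : Phi k 1 0 = LinearMap.id :=
  Lhom_ext fun a => by simp [Phi_T]

lemma Phi_add' (f g : Polynomial k) (d : ℤ) : Phi k (f + g) d = Phi k f d + Phi k g d :=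
  Lhom_ext fun a => by simp [Phi_T, add_smul]

lemma Phi_smul' (c : k) (f : Polynomial k) (d : ℤ) : Phi k (c • f) d = c • Phi k f d :=
  Lhom_ext fun a => by simp [Phi_T, smul_smul]

lemma Phi_comp (f g : Polynomial k) (d e : ℤ) :
    (Phi k f d) ∘ₗ (Phi k g e) =
      Phi k ((f.comp (Polynomial.X + Polynomial.C (e : k))) * g) (d + e) :=
  Lhom_ext fun a => by
    simp only [LinearMap.comp_apply, Phi_T, map_smul, eval_mul, eval_comp, eval_add, eval_X,
      eval_C, smul_smul]
    rw [add_assoc]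
    ring_nf
    push_cast
    ring_nf

lemma Phi_inj [CharZero k] (s : Finset ℤ) (F : ℤ → Polynomial k)
    (h : (∑ d ∈ s, Phi k (F d) d) = 0) : ∀ d ∈ s, F d = 0 := by
  intro d₀ hd₀
  have hroot : ∀ a : ℤ, (F d₀).eval (a : k) = 0 := by
    intro a
    have h1 : (∑ d ∈ s, Phi k (F d) d) (T a) = 0 := by rw [h]; rfl
    rw [LinearMap.sum_apply] at h1
    simp only [Phi_T] at h1
    have h2 : (∑ d ∈ s, (F d).eval (a:k) • T (d + a) : LaurentPolynomial k).coeff (d₀ + a) = 0 := by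
      rw [h1]; rfl
    rw [AddMonoidAlgebra.coeff_sum, Finsupp.finset_sum_apply] at h2
    rw [Finset.sum_eq_single d₀] at h2
    · rw [AddMonoidAlgebra.coeff_smul, Finsupp.smul_apply, T_apply, if_pos rfl, smul_eq_mul, mul_one] at h2
      exact h2
    · intro b _ hne
      rw [AddMonoidAlgebra.coeff_smul, Finsupp.smul_apply, T_apply, if_neg (by omega), smul_zero]
    · exact fun h => absurd hd₀ h
  have : {x : k | (F d₀).IsRoot x}.Infinite := by
    apply Set.Infinite.mono (s := Set.range (fun a : ℤ => (a : k)))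
    · rintro _ ⟨a, rfl⟩; exact hroot a
    · exact Set.infinite_range_of_injective Int.cast_injective
  exact Polynomial.eq_zero_of_infinite_isRoot _ this

end parts

/-- `Φ : k[x] # ℤ → 𝒟_K` is an isomorphism of `ℤ`-graded `k`-algebras. -/
theorem crossed_product_iso_diffOps (k : Type*) [Field k] [CharZero k] :
    -- Φ lands in the ring of differential operators
    (∀ (f : Polynomial k) (d : ℤ), ∃ n : ℕ, IsDiffOp k (LaurentPolynomial k) n (Phi k f d)) ∧
    -- Φ is graded: the image of k[x] # t^d maps t^a into k·t^{d+a}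
    (∀ (f : Polynomial k) (d a : ℤ), ∃ c : k,
      Phi k f d (LaurentPolynomial.T a) = c • LaurentPolynomial.T (d + a)) ∧
    -- Φ is unital and k-linear in each graded component
    (Phi k 1 0 = LinearMap.id) ∧
    (∀ (f g : Polynomial k) (d : ℤ), Phi k (f + g) d = Phi k f d + Phi k g d) ∧
    (∀ (c : k) (f : Polynomial k) (d : ℤ), Phi k (c • f) d = c • Phi k f d) ∧
    -- Φ is multiplicative: (f # t^d)(g # t^e) = σ^e(f)·g # t^{d+e}
    (∀ (f g : Polynomial k) (d e : ℤ),
      (Phi k f d) ∘ₗ (Phi k g e) =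
        Phi k ((f.comp (Polynomial.X + Polynomial.C (e : k))) * g) (d + e)) ∧
    -- Φ is injective componentwise
    (∀ (s : Finset ℤ) (F : ℤ → Polynomial k),
      (∑ d ∈ s, Phi k (F d) d) = 0 → ∀ d ∈ s, F d = 0) ∧
    -- Φ is surjective onto the differential operators
    (∀ D : LaurentPolynomial k →ₗ[k] LaurentPolynomial k,
      (∃ n : ℕ, IsDiffOp k (LaurentPolynomial k) n D) ↔
        ∃ (s : Finset ℤ) (F : ℤ → Polynomial k), D = ∑ d ∈ s, Phi k (F d) d) := by
  refine ⟨?_, ?_, ?_, ?_, ?_, ?_, ?_, ?_⟩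
  · exact fun f d => ⟨f.natDegree, isDiffOp_phi _ f d le_rfl⟩
  · exact fun f d a => ⟨f.eval (a:k), Phi_T f d a⟩
  · exact Phi_one_zero
  · exact Phi_add'
  · exact Phi_smul'
  · exact Phi_comp
  · exact Phi_inj
  · intro D
    constructor
    · rintro ⟨n, hn⟩; exact phi_surj n D hn
    · rintro ⟨s, F, rfl⟩
      exact ⟨s.sup fun d => (F d).natDegree, isDiffOp_sum s _ fun d hd =>
        isDiffOp_phi _ (F d) d (Finset.le_sup (f := fun d => (F d).natDegree) hd)⟩
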